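/- Let p, q > 1 with p + q < N (N real), and set Φ(t) = ∫₀^t log(1+s^q)·s^{p−1} ds. Then the integral ∫₀^1 Φ^{-1}(s)/s^{(N+1)/N} ds converges (is finite), where Φ^{-1} is the inverse of Φ restricted to [0,∞). -/

import Mathlib

open Real MeasureTheory Set Filter

theorem stmt_18 (p q N : ℝ) (hp : 1 < p) (hq : 1 < q) (hN : p + q < N)
    (Φ Φinv : ℝ → ℝ)
    (hΦ : ∀ t, Φ t = ∫ s in (0:ℝ)..t, Real.log (1 + s ^ q) * s ^ (p - 1))
    (hinv1 : ∀ t ∈ Set.Ici (0:ℝ), Φinv (Φ t) = t)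
    (hinv2 : ∀ s ∈ Set.Ici (0:ℝ), Φ (Φinv s) = s) :
    MeasureTheory.IntegrableOn
      (fun s : ℝ => Φinv s / s ^ ((N + 1) / N)) (Set.Ioc 0 1) := by
  have hpq : (0:ℝ) < p + q := by linarith
  have hNpos : (0:ℝ) < N := by linarith
  set f : ℝ → ℝ := fun s => Real.log (1 + s ^ q) * s ^ (p - 1) with hfdef
  -- continuity of the integrand on [0,∞)
  have hcont : ContinuousOn f (Set.Ici 0) := by
    apply ContinuousOn.mul
    · apply ContinuousOn.log
      · exact (continuous_const.add (Real.continuous_rpow_const (by linarith))).continuousOn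
      · intro s hs
        have h0 : (0:ℝ) ≤ s ^ q := Real.rpow_nonneg hs q
        positivity
    · exact (Real.continuous_rpow_const (by linarith)).continuousOn
  have hnonneg : ∀ s : ℝ, 0 ≤ s → 0 ≤ f s := by
    intro s hs
    have h0 : (0:ℝ) ≤ s ^ q := Real.rpow_nonneg hs q
    exact mul_nonneg (Real.log_nonneg (by linarith)) (Real.rpow_nonneg hs _)
  have hInt : ∀ a b : ℝ, 0 ≤ a → a ≤ b → IntervalIntegrable f volume a b := by
    intro a b ha hab
    apply (hcont.mono ?_).intervalIntegrable
    rw [Set.uIcc_of_le hab]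
    exact fun x hx => le_trans ha hx.1
  -- monotonicity of Φ on [0,∞)
  have hmono : ∀ a b : ℝ, 0 ≤ a → a ≤ b → Φ a ≤ Φ b := by
    intro a b ha hab
    rw [hΦ a, hΦ b]
    have h1 : IntervalIntegrable f volume 0 a := hInt 0 a le_rfl ha
    have h2 : IntervalIntegrable f volume a b := hInt a b ha hab
    have hadd := intervalIntegral.integral_add_adjacent_intervals h1 h2
    have hpos : 0 ≤ ∫ s in a..b, f s :=
      intervalIntegral.integral_nonneg hab (fun u hu => hnonneg u (le_trans ha hu.1))
    rw [← hadd]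
    linarith
  -- lower bound for Φ : for 0 ≤ t ≤ M, t^(p+q) / ((1+M^q)(p+q)) ≤ Φ t
  have hlow : ∀ M t : ℝ, 0 ≤ t → t ≤ M → t ^ (p + q) / ((1 + M ^ q) * (p + q)) ≤ Φ t := by
    intro M t ht htM
    have hM : 0 ≤ M := le_trans ht htM
    have hMq : 0 ≤ M ^ q := Real.rpow_nonneg hM q
    rw [hΦ t]
    have key : ∀ s ∈ Set.Icc (0:ℝ) t, s ^ (p + q - 1) / (1 + M ^ q) ≤ f s := by
      intro s hs
      have hs0 : 0 ≤ s := hs.1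
      have hsq : 0 ≤ s ^ q := Real.rpow_nonneg hs0 q
      have hsqM : s ^ q ≤ M ^ q := Real.rpow_le_rpow hs0 (le_trans hs.2 htM) (by linarith)
      have hlog : s ^ q / (1 + M ^ q) ≤ Real.log (1 + s ^ q) := by
        have h1 : 1 - (1 + s ^ q)⁻¹ ≤ Real.log (1 + s ^ q) :=
          Real.one_sub_inv_le_log_of_pos (by linarith)
        have hne : (1:ℝ) + s ^ q ≠ 0 := by positivity
        have h3 : s ^ q / (1 + s ^ q) = 1 - (1 + s ^ q)⁻¹ := by
          field_simp
          ring
        have h2 : s ^ q / (1 + M ^ q) ≤ s ^ q / (1 + s ^ q) := by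
          gcongr
        linarith
      have heq : s ^ (p + q - 1) / (1 + M ^ q) = (s ^ q / (1 + M ^ q)) * s ^ (p - 1) := by
        rw [show p + q - 1 = q + (p - 1) by ring, Real.rpow_add' hs0 (by nlinarith)]
        ring
      rw [heq]
      exact mul_le_mul_of_nonneg_right hlog (Real.rpow_nonneg hs0 _)
    have hIcalc : (∫ s in (0:ℝ)..t, s ^ (p + q - 1) / (1 + M ^ q))
        = t ^ (p + q) / ((1 + M ^ q) * (p + q)) := by
      rw [intervalIntegral.integral_div,
        _root_.integral_rpow (Or.inl (by linarith : (-1:ℝ) < p + q - 1)),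
        show p + q - 1 + 1 = p + q by ring, Real.zero_rpow hpq.ne', sub_zero, div_div]
      ring
    rw [← hIcalc]
    apply intervalIntegral.integral_mono_on ht
    · exact ((intervalIntegral.intervalIntegrable_rpow' (by linarith)).div_const _)
    · exact hInt 0 t le_rfl ht
    · exact key
  -- choose T with 1 ≤ T and 1 ≤ Φ T
  obtain ⟨T, hT1, hTPhi⟩ : ∃ T : ℝ, 1 ≤ T ∧ 1 ≤ Φ T := by
    have htend : Tendsto (fun T : ℝ => T ^ p / (2 * (p + q))) atTop atTop :=
      (tendsto_rpow_atTop (by linarith)).atTop_div_const (by linarith)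
    obtain ⟨T, hTa, hTb⟩ := ((htend.eventually_ge_atTop 1).and (eventually_ge_atTop 1)).exists
    refine ⟨T, hTb, ?_⟩
    have hT0 : (0:ℝ) < T := by linarith
    have hTq1 : (1:ℝ) ≤ T ^ q := Real.one_le_rpow hTb (by linarith)
    have hTpq : T ^ (p + q) = T ^ p * T ^ q := Real.rpow_add hT0 p q
    have h1 : T ^ p / (2 * (p + q)) ≤ T ^ (p + q) / ((1 + T ^ q) * (p + q)) := by
      rw [div_le_div_iff₀ (by positivity) (by positivity), hTpq]
      nlinarith [mul_nonneg (sub_nonneg.mpr hTq1) (mul_nonneg (Real.rpow_nonneg hT0.le p) hpq.le)]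
    have h2 := hlow T T hT0.le le_rfl
    linarith
  have hT0 : (0:ℝ) ≤ T := by linarith
  -- continuity of Φ on [0, T]
  have hPhicont : ContinuousOn Φ (Set.Icc 0 T) := by
    have hint : IntegrableOn f (Set.uIcc 0 T) volume := by
      rw [Set.uIcc_of_le hT0, ← intervalIntegrable_iff_integrableOn_Icc_of_le hT0]
      exact hInt 0 T le_rfl hT0
    have h := intervalIntegral.continuousOn_primitive_interval hint
    rw [Set.uIcc_of_le hT0] at h
    have : Set.EqOn Φ (fun x => ∫ s in (0:ℝ)..x, f s) (Set.Icc 0 T) := fun x _ => hΦ x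
    exact ContinuousOn.congr h this
  -- Φinv maps [0,1] into [0,T]
  have hinv_mem : ∀ s : ℝ, 0 ≤ s → s ≤ 1 → Φinv s ∈ Set.Icc (0:ℝ) T := by
    intro s hs hs1
    have hPhi0 : Φ 0 = 0 := by rw [hΦ 0, intervalIntegral.integral_same]
    have hmem : s ∈ Set.Icc (Φ 0) (Φ T) := ⟨by rw [hPhi0]; exact hs, by linarith⟩
    obtain ⟨t, htmem, hts⟩ := intermediate_value_Icc hT0 hPhicont hmem
    rw [← hts, hinv1 t htmem.1]
    exact htmem
  set c : ℝ := (1 + T ^ q) * (p + q) with hcdef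
  have hc : 0 < c := by
    have := Real.rpow_nonneg hT0 q
    positivity
  set α : ℝ := 1 / (p + q) with hadef
  set r : ℝ := α - (N + 1) / N with hrdef
  set C : ℝ := c ^ α with hCdef
  have hα : 0 < α := by positivity
  have hr : -1 < r := by
    have h1 : 1 / N < α := one_div_lt_one_div_of_lt hpq hN
    have h2 : (N + 1) / N = 1 + 1 / N := by rw [add_div, div_self hNpos.ne']
    rw [hrdef, h2]
    linarith
  have hC : 0 ≤ C := Real.rpow_nonneg hc.le α
  -- pointwise bound
  have hbound : ∀ s ∈ Set.Ioc (0:ℝ) 1, ‖Φinv s / s ^ ((N + 1) / N)‖ ≤ C * s ^ r := by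
    intro s hs
    obtain ⟨ht0, htT⟩ := hinv_mem s hs.1.le hs.2
    have hts : Φ (Φinv s) = s := hinv2 s hs.1.le
    have h1 : Φinv s ^ (p + q) / c ≤ s := by
      have h0 := hlow T (Φinv s) ht0 htT
      rw [hts] at h0
      exact h0
    have h2 : Φinv s ^ (p + q) ≤ c * s := by
      rw [div_le_iff₀ hc] at h1; linarith [mul_comm s c]
    have h3 : Φinv s ≤ (c * s) ^ α := by
      calc Φinv s = (Φinv s ^ (p + q)) ^ α := by
            rw [← Real.rpow_mul ht0, mul_one_div, div_self hpq.ne', Real.rpow_one]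
        _ ≤ (c * s) ^ α := Real.rpow_le_rpow (Real.rpow_nonneg ht0 _) h2 hα.le
    have h4 : (c * s) ^ α = C * s ^ α := Real.mul_rpow hc.le hs.1.le
    have hse : (0:ℝ) < s ^ ((N + 1) / N) := Real.rpow_pos_of_pos hs.1 _
    rw [Real.norm_eq_abs, abs_of_nonneg (div_nonneg ht0 hse.le)]
    have h6 : C * s ^ α / s ^ ((N + 1) / N) = C * s ^ r := by
      rw [mul_div_assoc, ← Real.rpow_sub hs.1, hrdef]
    rw [← h6]
    exact (div_le_div_iff_of_pos_right hse).mpr (h4 ▸ h3)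
  -- comparison
  have hg : IntegrableOn (fun s : ℝ => C * s ^ r) (Set.Ioc 0 1) volume := by
    have h := (intervalIntegral.intervalIntegrable_rpow' (a := 0) (b := 1) hr).const_mul C
    rwa [intervalIntegrable_iff_integrableOn_Ioc_of_le (by norm_num : (0:ℝ) ≤ 1)] at h
  apply Integrable.mono' hg ?_ ?_
  · have hm : MonotoneOn Φinv (Set.Ioc (0:ℝ) 1) := by
      intro s1 hs1 s2 hs2 h12
      by_contra hlt
      push_neg at hlt
      have m2 := hinv_mem s2 hs2.1.le hs2.2
      have hle := hmono _ _ m2.1 hlt.le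
      rw [hinv2 s1 hs1.1.le, hinv2 s2 hs2.1.le] at hle
      have heq : s1 = s2 := le_antisymm h12 hle
      rw [heq] at hlt
      exact lt_irrefl _ hlt
    have hmeas : AEMeasurable Φinv (volume.restrict (Set.Ioc (0:ℝ) 1)) :=
      aemeasurable_restrict_of_monotoneOn measurableSet_Ioc hm
    have hden : Measurable (fun s : ℝ => s ^ ((N + 1) / N)) :=
      (Real.continuous_rpow_const (div_nonneg (by linarith) hNpos.le)).measurable
    exact (hmeas.div hden.aemeasurable).aestronglyMeasurable
  · exact (ae_restrict_iff' measurableSet_Ioc).mpr (Filter.Eventually.of_forall hbound)
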